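/- For every k ≥ 3, with A_k = S_{k-2} and B_k = Â_k, it holds that A_k = A_{k-1} B_{k-1} and B_k = A_{k-1} A_{k-1}. -/
import Mathlib


/-- The morphism φ: a ↦ ab, b ↦ aa, with `false = a`, `true = b`. -/
def pdPhi (c : Bool) : List Bool := if c then [false, false] else [false, true]

/-- The k-th period-doubling sequence. -/
def pd : ℕ → List Bool
  | 0 => [false]
  | k + 1 => (pd k).flatMap pdPhi

/-- `hat w` : `w` with its last character flipped. -/
def hat (w : List Bool) : List Bool := w.dropLast ++ (w.getLast?.map Bool.not).toList

lemma hat_concat (u : List Bool) (c : Bool) : hat (u ++ [c]) = u ++ [!c] := by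
  simp [hat]

lemma exists_concat {w : List Bool} (h : w ≠ []) : ∃ u c, w = u ++ [c] := by
  obtain ⟨u, c, huc⟩ := w.eq_nil_or_concat.resolve_left h
  exact ⟨u, c, by simpa [List.concat_eq_append] using huc⟩

lemma hat_ne_nil {w : List Bool} (h : w ≠ []) : hat w ≠ [] := by
  obtain ⟨u, c, rfl⟩ := exists_concat h
  simp [hat_concat]

lemma hat_hat {w : List Bool} (h : w ≠ []) : hat (hat w) = w := by
  obtain ⟨u, c, rfl⟩ := exists_concat h
  simp [hat_concat]

lemma hat_append (u : List Bool) {v : List Bool} (h : v ≠ []) :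
    hat (u ++ v) = u ++ hat v := by
  obtain ⟨v', c, rfl⟩ := exists_concat h
  rw [← List.append_assoc, hat_concat, hat_concat, List.append_assoc]

lemma phi_commute {w : List Bool} (h : w ≠ []) :
    (hat w).flatMap pdPhi = hat (w.flatMap pdPhi) := by
  obtain ⟨u, c, rfl⟩ := exists_concat h
  cases c <;> simp [hat_concat, pdPhi, hat]

lemma pd_ne_nil (n : ℕ) : pd n ≠ [] := by
  induction n with
  | zero => simp [pd]
  | succ n ih =>
    obtain ⟨u, c, huc⟩ := exists_concat ih
    show (pd n).flatMap pdPhi ≠ []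
    rw [huc]
    cases c <;> simp [pdPhi]

lemma key (n : ℕ) : pd (n + 1) = pd n ++ hat (pd n) ∧
    hat (pd (n + 1)) = pd n ++ pd n := by
  induction n with
  | zero => simp [pd, pdPhi, hat]
  | succ n ih =>
    obtain ⟨h1, h2⟩ := ih
    have hA : pd (n + 2) = pd (n + 1) ++ hat (pd (n + 1)) := by
      have e : pd (n + 2) = (pd n).flatMap pdPhi ++ (hat (pd n)).flatMap pdPhi := by
        show (pd (n + 1)).flatMap pdPhi = _
        rw [h1, List.flatMap_append]
      rw [e, phi_commute (pd_ne_nil n)]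
      rfl
    refine ⟨hA, ?_⟩
    rw [hA, hat_append _ (hat_ne_nil (pd_ne_nil _)), hat_hat (pd_ne_nil _)]

theorem pd_AB_recurrence (k : ℕ) (hk : 3 ≤ k) :
    pd (k - 2) = pd (k - 3) ++ hat (pd (k - 3)) ∧
    hat (pd (k - 2)) = pd (k - 3) ++ pd (k - 3) := by
  obtain ⟨n, rfl⟩ : ∃ n, k = n + 3 := ⟨k - 3, by omega⟩
  have h2 : n + 3 - 2 = (n + 3 - 3) + 1 := by omega
  rw [h2]
  exact key (n + 3 - 3)
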